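/- Factorization of the Dotsenko–Fateev operator at g = −1: with Dn₁ = x²(x−1)²∂ − x(x−1)(ax+bx+2cx−a−c−2x+1) and Dn₂ = ∂² − 2(ax+bx+2cx−a−c)/(x(x−1))·∂ + 2c(2a+1+2b+2c)/(x(x−1)), for every function u holomorphic on an open set U ⊆ ℂ∖{0,1} and every x ∈ U one has (DF(a,b,c,−1)u)(x) = (Dn₁(Dn₂ u))(x). -/

import Mathlib

/-!
STATEMENT 6: Factorization of the Dotsenko–Fateev operator at g = −1:
DF(a,b,c,−1) = Dn₁ ∘ Dn₂ with
Dn₁ = x²(x−1)²∂ − x(x−1)(ax+bx+2cx−a−c−2x+1) and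
Dn₂ = ∂² − 2(ax+bx+2cx−a−c)/(x(x−1))·∂ + 2c(2a+1+2b+2c)/(x(x−1)).
-/

/-- Coefficient of ∂² of the Dotsenko–Fateev operator. -/
noncomputable def DF1 (a b c g x : ℂ) : ℂ :=
  -(x - 1) * x * (3*a*x + 3*b*x + 6*c*x + 2*g*x - 3*a - 3*c - g)

/-- Coefficient of ∂ of the Dotsenko–Fateev operator. -/
noncomputable def DF2 (a b c g x : ℂ) : ℂ :=
  (2*a^2 + 4*a*b + 12*a*c + 3*a*g + 2*b^2 + 12*b*c + 3*b*g + 12*c^2 + 8*c*g + g^2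
      + a + b + 6*c + g) * x^2
  + (-4*a^2 - 4*a*b - 16*a*c - 4*a*g - 8*b*c - 2*b*g - 12*c^2 - 8*c*g - g^2
      - 2*a - 6*c - g) * x
  + (2*a^2 + 4*a*c + a*g + 2*c^2 + c*g + a + c)

/-- Coefficient of 1 of the Dotsenko–Fateev operator. -/
noncomputable def DF3 (a b c g x : ℂ) : ℂ :=
  c * (2*a + 2*b + 2*c + g + 2) * (-(2*a + 2*b + 4*c + 2*g + 2)*x + 2*a + 2*c + g + 1)

/-- The Dotsenko–Fateev operator DF(a,b,c,g) acting on a function u. -/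
noncomputable def DFop (a b c g : ℂ) (u : ℂ → ℂ) : ℂ → ℂ := fun x =>
  x^2*(x - 1)^2 * iteratedDeriv 3 u x + DF1 a b c g x * iteratedDeriv 2 u x
    + DF2 a b c g x * deriv u x + DF3 a b c g x * u x

/-- The second factor Dn₂ acting on a function u. -/
noncomputable def Dn2 (a b c : ℂ) (u : ℂ → ℂ) : ℂ → ℂ := fun x =>
  iteratedDeriv 2 u x
  - 2*(a*x + b*x + 2*c*x - a - c)/(x*(x - 1)) * deriv u x
  + 2*c*(2*a + 1 + 2*b + 2*c)/(x*(x - 1)) * u x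

/-- The first factor Dn₁ acting on a function w. -/
noncomputable def Dn1 (a b c : ℂ) (w : ℂ → ℂ) : ℂ → ℂ := fun x =>
  x^2*(x - 1)^2 * deriv w x - x*(x - 1)*(a*x + b*x + 2*c*x - a - c - 2*x + 1) * w x

theorem DF_factorization_g_eq_neg_one (a b c : ℂ) (U : Set ℂ) (hU : IsOpen U)
    (hU0 : (0 : ℂ) ∉ U) (hU1 : (1 : ℂ) ∉ U)
    (u : ℂ → ℂ) (hu : DifferentiableOn ℂ u U) (x : ℂ) (hx : x ∈ U) :
    DFop a b c (-1) u x = Dn1 a b c (Dn2 a b c u) x := by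
  have hx0 : x ≠ 0 := fun h => hU0 (h ▸ hx)
  have hx1 : x - 1 ≠ 0 := sub_ne_zero.mpr (fun h => hU1 (h ▸ hx))
  have hD : x * (x - 1) ≠ 0 := mul_ne_zero hx0 hx1
  have hA : AnalyticOnNhd ℂ u U := hu.analyticOnNhd hU
  have hit2 : iteratedDeriv 2 u = deriv (deriv u) := by
    simp [iteratedDeriv_succ, iteratedDeriv_one]
  have hit3 : iteratedDeriv 3 u = deriv (deriv (deriv u)) := by
    simp [iteratedDeriv_succ, iteratedDeriv_one]
  have hu0 : HasDerivAt u (deriv u x) x := (hA x hx).differentiableAt.hasDerivAt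
  have hu1 : HasDerivAt (deriv u) (deriv (deriv u) x) x :=
    ((hA.deriv) x hx).differentiableAt.hasDerivAt
  have hu2 : HasDerivAt (deriv (deriv u)) (deriv (deriv (deriv u)) x) x :=
    ((hA.deriv.deriv) x hx).differentiableAt.hasDerivAt
  -- denominator
  have hDd : HasDerivAt (fun y : ℂ => y * (y - 1)) (1 * (x - 1) + x * 1) x :=
    (hasDerivAt_id x).mul ((hasDerivAt_id x).sub_const 1)
  -- numerator of p
  have hP : HasDerivAt (fun y : ℂ => 2*(a*y + b*y + 2*c*y - a - c))
      (2 * (a + b + 2*c)) x := by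
    have h : HasDerivAt (fun y : ℂ => a*y + b*y + 2*c*y - a - c) (a + b + 2*c) x := by
      have h0 := ((((hasDerivAt_id x).const_mul a).add ((hasDerivAt_id x).const_mul b)).add
          ((hasDerivAt_id x).const_mul (2*c))).sub_const (a + c)
      simp only [id, Pi.add_apply] at h0
      exact (h0.congr_deriv (by ring)).congr_of_eventuallyEq
        (Filter.Eventually.of_forall fun y => by ring)
    simpa using h.const_mul 2
  set P := 2*(a*x + b*x + 2*c*x - a - c) with hPdef
  set Q := 2*c*(2*a + 1 + 2*b + 2*c) with hQdef
  set D := x * (x - 1) with hDdef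
  set D' := 1 * (x - 1) + x * 1 with hD'def
  have hp : HasDerivAt (fun y : ℂ => 2*(a*y + b*y + 2*c*y - a - c)/(y*(y - 1)))
      ((2*(a + b + 2*c) * D - P * D') / D^2) x := hP.div hDd hD
  have hq : HasDerivAt (fun y : ℂ => 2*c*(2*a + 1 + 2*b + 2*c)/(y*(y - 1)))
      ((0 * D - Q * D') / D^2) x := (hasDerivAt_const x Q).div hDd hD
  have hw : HasDerivAt (Dn2 a b c u)
      (deriv (deriv (deriv u)) x
        - (((2*(a + b + 2*c) * D - P * D') / D^2) * deriv u x
            + (P / D) * deriv (deriv u) x)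
        + (((0 * D - Q * D') / D^2) * u x + (Q / D) * deriv u x)) x := by
    have : Dn2 a b c u = fun y =>
        deriv (deriv u) y - 2*(a*y + b*y + 2*c*y - a - c)/(y*(y - 1)) * deriv u y
          + 2*c*(2*a + 1 + 2*b + 2*c)/(y*(y - 1)) * u y := by
      funext y; simp [Dn2, hit2]
    rw [this]
    exact (hu2.sub (hp.mul hu1)).add (hq.mul hu0)
  simp only [DFop, DF1, DF2, DF3, Dn1, Dn2, hit2, hit3, hw.deriv]
  field_simp
  ring
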